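/- Define Θ(p,q) = 2·arctan( −sin((p−q)/2) / (cos((p+q)/2) + cos((p−q)/2)) ) for real p, q with the denominator nonzero (as holds for p, q ∈ (−π, π)). Then for every fixed q ∈ (−π, π), as ε → 0 with ε > 0: Θ(−π+ε, q) = π − 2ε + ε²·tan(q/2) + O(ε³) and Θ(π−ε, q) = −π + 2ε + ε²·tan(q/2) + O(ε³) (eq. (5.20), the expansion of the scattering phase near the boundary momenta ∓π). -/

import Mathlib

open Asymptotics

/-- The two-body scattering phase of the antiferromagnetic XXX chain:
`Θ(p,q) = 2·arctan( −sin((p−q)/2) / (cos((p+q)/2) + cos((p−q)/2)) )`. -/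
noncomputable def Theta (p q : ℝ) : ℝ :=
  2 * Real.arctan (-Real.sin ((p - q) / 2) / (Real.cos ((p + q) / 2) + Real.cos ((p - q) / 2)))

-- Lipschitz property of arctan
lemma arctan_lip (a b : ℝ) : |Real.arctan a - Real.arctan b| ≤ |a - b| := by
  have hanti : Antitone (fun x : ℝ => Real.arctan x - x) := by
    apply antitone_of_deriv_nonpos
    · exact Real.differentiable_arctan.sub differentiable_id
    · intro x
      have h : HasDerivAt (fun x : ℝ => Real.arctan x - x) (1 / (1 + x ^ 2) - 1) x :=
        (Real.hasDerivAt_arctan x).sub (hasDerivAt_id x)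
      rw [h.deriv]
      have h1 : (0:ℝ) < 1 + x ^ 2 := by positivity
      have : 1 / (1 + x ^ 2) ≤ 1 := by
        rw [div_le_one h1]; nlinarith [sq_nonneg x]
      linarith
  have hmono : Monotone Real.arctan := Real.arctan_strictMono.monotone
  rcases le_total b a with h | h
  · have h1 := hanti h
    have h2 := hmono h
    rw [abs_of_nonneg (by linarith), abs_of_nonneg (by linarith)]
    simp only at h1; linarith
  · have h1 := hanti h
    have h2 := hmono h
    rw [abs_of_nonpos (by linarith), abs_of_nonpos (by linarith)]
    simp only at h1; linarith

-- |arctan z - z| ≤ z^3 for z ≥ 0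
lemma arctan_approx {z : ℝ} (hz : 0 ≤ z) : |Real.arctan z - z| ≤ z ^ 3 := by
  have hup : Real.arctan z ≤ z := by
    have hmono : Monotone (fun x : ℝ => x - Real.arctan x) := by
      apply monotone_of_deriv_nonneg
      · exact differentiable_id.sub Real.differentiable_arctan
      · intro x
        have h : HasDerivAt (fun x : ℝ => x - Real.arctan x) (1 - 1 / (1 + x ^ 2)) x :=
          (hasDerivAt_id x).sub (Real.hasDerivAt_arctan x)
        rw [h.deriv]
        have h1 : (0:ℝ) < 1 + x ^ 2 := by positivity
        have : 1 / (1 + x ^ 2) ≤ 1 := by rw [div_le_one h1]; nlinarith [sq_nonneg x]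
        linarith
    have := hmono hz
    simpa [Real.arctan_zero] using this
  have hlo : z - z ^ 3 ≤ Real.arctan z := by
    have hmono : Monotone (fun x : ℝ => Real.arctan x - (x - x ^ 3)) := by
      apply monotone_of_deriv_nonneg
      · exact Real.differentiable_arctan.sub (differentiable_id.sub (differentiable_pow 3))
      · intro x
        have h : HasDerivAt (fun x : ℝ => Real.arctan x - (x - x ^ 3))
            (1 / (1 + x ^ 2) - (1 - 3 * x ^ 2)) x := by
          have h3 : HasDerivAt (fun x : ℝ => x ^ 3) (3 * x ^ 2) x := by
            simpa using hasDerivAt_pow 3 x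
          exact (Real.hasDerivAt_arctan x).sub ((hasDerivAt_id x).sub h3)
        rw [h.deriv]
        have h1 : (0:ℝ) < 1 + x ^ 2 := by positivity
        have heq : 1 / (1 + x ^ 2) - (1 - 3 * x ^ 2) = (2 * x ^ 2 + 3 * x ^ 4) / (1 + x ^ 2) := by
          field_simp; ring
        rw [heq]
        positivity
    have := hmono hz
    simpa [Real.arctan_zero] using this
  rw [abs_le]
  constructor <;> nlinarith [pow_nonneg hz 3]

-- tan upper bound
lemma tan_upper {x : ℝ} (hx : 0 < x) (hx2 : x ≤ 1/2) : Real.tan x ≤ x + 4 * x ^ 3 := by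
  have hcos : 1 - x ^ 2 / 2 < Real.cos x := Real.one_sub_sq_div_two_lt_cos hx.ne'
  have hcos0 : (0:ℝ) < 1 - x ^ 2 / 2 := by nlinarith
  have hsin : Real.sin x < x := Real.sin_lt hx
  have h : Real.tan x ≤ x / (1 - x ^ 2 / 2) := by
    rw [Real.tan_eq_sin_div_cos]
    exact div_le_div₀ hx.le hsin.le hcos0 hcos.le
  calc Real.tan x ≤ x / (1 - x ^ 2 / 2) := h
    _ ≤ x + 4 * x ^ 3 := by
        rw [div_le_iff₀ hcos0]
        have hx2' : x ^ 2 ≤ 1/4 := by nlinarith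
        nlinarith [pow_pos hx 3, hx2']

set_option maxHeartbeats 1000000 in
lemma theta_left (q : ℝ) (hq : q ∈ Set.Ioo (-Real.pi) Real.pi) :
    (fun ε : ℝ => Theta (-Real.pi + ε) q - (Real.pi - 2 * ε + ε ^ 2 * Real.tan (q / 2)))
      =O[nhdsWithin 0 (Set.Ioi 0)] fun ε : ℝ => ε ^ 3 := by
  obtain ⟨hq1, hq2⟩ := hq
  set T := Real.tan (q / 2) with hT
  set A := |T| with hA
  have hA0 : 0 ≤ A := abs_nonneg T
  have hTA : T ≤ A := le_abs_self T
  have hTA' : -A ≤ T := neg_abs_le T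
  have hT2 : T ^ 2 = A ^ 2 := (sq_abs T).symm
  have hπ3 : (3:ℝ) < Real.pi := Real.pi_gt_three
  set δ : ℝ := min (min 1 (Real.pi + q)) (1 / (2 * (A + 1))) with hδdef
  have hδpos : 0 < δ := lt_min (lt_min one_pos (by linarith)) (by positivity)
  have hδ1 : δ ≤ 1 := (min_le_left _ _).trans (min_le_left _ _)
  have hδq : δ ≤ Real.pi + q := (min_le_left _ _).trans (min_le_right _ _)
  have hδA : δ ≤ 1 / (2 * (A + 1)) := min_le_right _ _
  clear_value δ A
  rw [Asymptotics.isBigO_iff]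
  refine ⟨20 + 4 * A + 4 * A ^ 2, ?_⟩
  filter_upwards [Ioo_mem_nhdsGT_of_mem (Set.left_mem_Ico.mpr hδpos)] with ε hεmem
  obtain ⟨hε0, hεδ⟩ := hεmem
  have hε1 : ε ≤ 1 := hεδ.le.trans hδ1
  have hεq : ε < Real.pi + q := hεδ.trans_le hδq
  have hεA : ε * (A + 1) ≤ 1 / 2 := by
    have h1 : (0:ℝ) < A + 1 := by linarith
    have h2 : ε ≤ 1 / (2 * (A + 1)) := hεδ.le.trans hδA
    calc ε * (A + 1) ≤ (1 / (2 * (A + 1))) * (A + 1) := mul_le_mul_of_nonneg_right h2 h1.le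
      _ = 1 / 2 := by field_simp
  have hεA' : ε * A ≤ 1 / 2 := by
    have h3 : ε * (A + 1) = ε * A + ε := by ring
    linarith
  -- positivity facts
  have hcq : 0 < Real.cos (q / 2) := Real.cos_pos_of_mem_Ioo ⟨by linarith, by linarith⟩
  have hs : 0 < Real.sin (ε / 2) := Real.sin_pos_of_pos_of_lt_pi (by linarith) (by linarith)
  have hcε : 0 < Real.cos (ε / 2) := Real.cos_pos_of_mem_Ioo ⟨by linarith, by linarith⟩
  have hc : 0 < Real.cos ((ε - q) / 2) := Real.cos_pos_of_mem_Ioo ⟨by linarith, by linarith⟩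
  set t := Real.tan (ε / 2) with ht
  have hexp : Real.cos ((ε - q) / 2)
      = Real.cos (ε / 2) * Real.cos (q / 2) + Real.sin (ε / 2) * Real.sin (q / 2) := by
    rw [show (ε - q) / 2 = ε / 2 - q / 2 by ring, Real.cos_sub]
  have hone_eq : 1 + t * T = Real.cos ((ε - q) / 2) / (Real.cos (ε / 2) * Real.cos (q / 2)) := by
    rw [ht, hT, Real.tan_eq_sin_div_cos, Real.tan_eq_sin_div_cos, hexp]
    field_simp
  have honepos : 0 < 1 + t * T := by rw [hone_eq]; positivity
  set y := 2 * t / (1 + t * T) with hy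
  have hkey : Theta (-Real.pi + ε) q = Real.pi - 2 * Real.arctan y := by
    rw [Theta]
    have e1 : (-Real.pi + ε - q) / 2 = (ε - q) / 2 - Real.pi / 2 := by ring
    have e2 : (-Real.pi + ε + q) / 2 = (ε + q) / 2 - Real.pi / 2 := by ring
    rw [e1, e2, Real.sin_sub_pi_div_two, Real.cos_sub_pi_div_two, Real.cos_sub_pi_div_two,
      neg_neg]
    have hden : Real.sin ((ε + q) / 2) + Real.sin ((ε - q) / 2)
        = 2 * Real.sin (ε / 2) * Real.cos (q / 2) := by
      rw [show (ε + q) / 2 = ε / 2 + q / 2 by ring, show (ε - q) / 2 = ε / 2 - q / 2 by ring,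
        Real.sin_add, Real.sin_sub]
      ring
    rw [hden]
    have hy0pos : 0 < 2 * Real.sin (ε / 2) * Real.cos (q / 2) / Real.cos ((ε - q) / 2) := by
      positivity
    have hinv : Real.cos ((ε - q) / 2) / (2 * Real.sin (ε / 2) * Real.cos (q / 2))
        = (2 * Real.sin (ε / 2) * Real.cos (q / 2) / Real.cos ((ε - q) / 2))⁻¹ := by
      rw [inv_div]
    have hy0 : 2 * Real.sin (ε / 2) * Real.cos (q / 2) / Real.cos ((ε - q) / 2) = y := by
      rw [hy, hone_eq, ht, Real.tan_eq_sin_div_cos]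
      field_simp
    rw [hinv, Real.arctan_inv_of_pos hy0pos, hy0]
    ring
  -- quantitative bounds
  have htlow : ε / 2 ≤ t := by
    rw [ht]; exact (Real.lt_tan (by linarith) (by linarith)).le
  have htup : t ≤ ε / 2 + 4 * (ε / 2) ^ 3 := by
    rw [ht]; exact tan_upper (by linarith) (by linarith)
  clear_value t y
  have hr0 : 0 ≤ t - ε / 2 := by linarith
  have hr : t - ε / 2 ≤ ε ^ 3 / 2 := by
    have h4 : 4 * (ε / 2) ^ 3 = ε ^ 3 / 2 := by ring
    linarith
  have hε3 : ε ^ 3 ≤ ε := by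
    have h5 : 0 ≤ ε * (1 - ε) * (1 + ε) :=
      mul_nonneg (mul_nonneg hε0.le (by linarith)) (by linarith)
    have h6 : ε * (1 - ε) * (1 + ε) = ε - ε ^ 3 := by ring
    linarith
  have htε : t ≤ ε := by linarith
  have ht0 : 0 ≤ t := by linarith
  have hD : 1 / 2 ≤ 1 + t * T := by
    have h7 : 0 ≤ t * (T + A) := mul_nonneg ht0 (by linarith)
    have h8 : t * A ≤ ε * A := mul_le_mul_of_nonneg_right htε hA0
    have h9 : t * (T + A) = t * T + t * A := by ring
    linarith
  set z := ε - ε ^ 2 * T / 2 with hz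
  have hsqT : ε ^ 2 * T ≤ ε ^ 2 * A := mul_le_mul_of_nonneg_left hTA (sq_nonneg ε)
  have hsqT' : ε ^ 2 * (-T) ≤ ε ^ 2 * A := mul_le_mul_of_nonneg_left (by linarith) (sq_nonneg ε)
  have hsqA : ε ^ 2 * A ≤ ε / 2 := by
    have h10 : ε * (ε * A) ≤ ε * (1 / 2) := mul_le_mul_of_nonneg_left hεA' hε0.le
    have h11 : ε * (ε * A) = ε ^ 2 * A := by ring
    linarith
  have hz0 : 0 < z := by rw [hz]; linarith
  have hz2 : z ≤ 2 * ε := by rw [hz]; linarith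
  have hεr : ε * (t - ε / 2) ≤ ε ^ 3 / 2 := by
    have ha : ε * (t - ε / 2) ≤ ε * (ε ^ 3 / 2) := mul_le_mul_of_nonneg_left hr hε0.le
    have hb : 0 ≤ ε ^ 3 * (1 - ε) := mul_nonneg (by positivity) (by linarith)
    have hceq : ε ^ 3 * (1 - ε) = ε ^ 3 - ε ^ 4 := by ring
    have hd : ε * (ε ^ 3 / 2) = ε ^ 4 / 2 := by ring
    linarith
  have hnum_eq : 2 * t - z * (1 + t * T)
      = 2 * (t - ε / 2) - ε * T * (t - ε / 2) + ε ^ 2 * T ^ 2 * t / 2 := by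
    rw [hz]; ring
  have hnum : |2 * t - z * (1 + t * T)| ≤ ε ^ 3 * (1 + A + A ^ 2) := by
    have hu0 : 0 ≤ ε * (t - ε / 2) := mul_nonneg hε0.le hr0
    have huT_up : ε * (t - ε / 2) * T ≤ ε * (t - ε / 2) * A :=
      mul_le_mul_of_nonneg_left hTA hu0
    have huT_lo : ε * (t - ε / 2) * -A ≤ ε * (t - ε / 2) * T :=
      mul_le_mul_of_nonneg_left hTA' hu0
    have huA : ε * (t - ε / 2) * A ≤ ε ^ 3 / 2 * A := mul_le_mul_of_nonneg_right hεr hA0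
    have hP2a : 0 ≤ ε ^ 2 * T ^ 2 * t := mul_nonneg (by positivity) ht0
    have hP2b : ε ^ 2 * T ^ 2 * t ≤ ε ^ 2 * T ^ 2 * ε :=
      mul_le_mul_of_nonneg_left htε (by positivity)
    have hP2c : ε ^ 2 * T ^ 2 * ε = ε ^ 3 * A ^ 2 := by rw [hT2]; ring
    have hcube : (0:ℝ) ≤ ε ^ 3 := by positivity
    have hcA : (0:ℝ) ≤ ε ^ 3 * A := by positivity
    have hcA2 : (0:ℝ) ≤ ε ^ 3 * A ^ 2 := by positivity
    rw [hnum_eq, abs_le]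
    constructor
    · linarith only [hr, hr0, huT_lo, huT_up, huA, hP2a, hP2b, hP2c, hcube, hcA, hcA2]
    · linarith only [hr, hr0, huT_lo, huT_up, huA, hP2a, hP2b, hP2c, hcube, hcA, hcA2]
  have hyz : |y - z| ≤ 2 * ε ^ 3 * (1 + A + A ^ 2) := by
    have heq : y - z = (2 * t - z * (1 + t * T)) / (1 + t * T) := by
      rw [hy]; field_simp
    rw [heq, abs_div, abs_of_pos (by linarith : (0:ℝ) < 1 + t * T)]
    have h1 : |2 * t - z * (1 + t * T)| / (1 + t * T)
        ≤ |2 * t - z * (1 + t * T)| / (1 / 2) :=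
      div_le_div_of_nonneg_left (abs_nonneg _) one_half_pos hD
    have h2 : |2 * t - z * (1 + t * T)| / (1 / 2) = 2 * |2 * t - z * (1 + t * T)| := by ring
    rw [h2] at h1
    linarith
  have haz : |Real.arctan z - z| ≤ 8 * ε ^ 3 := by
    have h1 := arctan_approx hz0.le
    have h2 : z ^ 3 ≤ (2 * ε) ^ 3 := pow_le_pow_left₀ hz0.le hz2 3
    have h3 : (2 * ε) ^ 3 = 8 * ε ^ 3 := by ring
    linarith
  have hlip : |Real.arctan y - Real.arctan z| ≤ |y - z| := arctan_lip y z
  have htri : |Real.arctan y - z| ≤ |Real.arctan y - Real.arctan z| + |Real.arctan z - z| :=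
    abs_sub_le _ _ _
  rw [Real.norm_eq_abs, Real.norm_eq_abs, hkey]
  have h10 : Real.pi - 2 * Real.arctan y - (Real.pi - 2 * ε + ε ^ 2 * T)
      = 2 * (z - Real.arctan y) := by rw [hz]; ring
  rw [h10, abs_mul, abs_two, abs_sub_comm z]
  have hε3abs : |ε ^ 3| = ε ^ 3 := abs_of_pos (by positivity)
  rw [hε3abs]
  linarith only [htri, hlip, hyz, haz]

lemma theta_symm (q ε : ℝ) : Theta (Real.pi - ε) q = - Theta (-Real.pi + ε) (-q) := by
  rw [Theta, Theta]
  rw [show (Real.pi - ε - q) / 2 = -((-Real.pi + ε + q) / 2) by ring,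
    show (Real.pi - ε + q) / 2 = -((-Real.pi + ε - q) / 2) by ring,
    show (-Real.pi + ε - -q) / 2 = (-Real.pi + ε + q) / 2 by ring,
    show (-Real.pi + ε + -q) / 2 = (-Real.pi + ε - q) / 2 by ring,
    Real.sin_neg, Real.cos_neg, Real.cos_neg, neg_neg]
  rw [show -Real.sin ((-Real.pi + ε + q) / 2) / (Real.cos ((-Real.pi + ε - q) / 2)
      + Real.cos ((-Real.pi + ε + q) / 2))
    = -(Real.sin ((-Real.pi + ε + q) / 2) / (Real.cos ((-Real.pi + ε - q) / 2)
      + Real.cos ((-Real.pi + ε + q) / 2))) by rw [neg_div],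
    Real.arctan_neg]
  ring

/-- Eq. (5.20): for fixed `q ∈ (−π, π)`, as `ε → 0⁺`,
`Θ(−π+ε, q) = π − 2ε + ε²·tan(q/2) + O(ε³)` and
`Θ(π−ε, q) = −π + 2ε + ε²·tan(q/2) + O(ε³)`. -/
theorem theta_expansion (q : ℝ) (hq : q ∈ Set.Ioo (-Real.pi) Real.pi) :
    ((fun ε : ℝ => Theta (-Real.pi + ε) q - (Real.pi - 2 * ε + ε ^ 2 * Real.tan (q / 2)))
        =O[nhdsWithin 0 (Set.Ioi 0)] fun ε : ℝ => ε ^ 3)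
    ∧ ((fun ε : ℝ => Theta (Real.pi - ε) q - (-Real.pi + 2 * ε + ε ^ 2 * Real.tan (q / 2)))
        =O[nhdsWithin 0 (Set.Ioi 0)] fun ε : ℝ => ε ^ 3) := by
  constructor
  · exact theta_left q hq
  · have hq' : -q ∈ Set.Ioo (-Real.pi) Real.pi := ⟨by linarith [hq.2], by linarith [hq.1]⟩
    have h := (theta_left (-q) hq').neg_left
    have hfun : (fun ε : ℝ => Theta (Real.pi - ε) q - (-Real.pi + 2 * ε + ε ^ 2 * Real.tan (q / 2)))
        = fun ε : ℝ => -(Theta (-Real.pi + ε) (-q)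
            - (Real.pi - 2 * ε + ε ^ 2 * Real.tan (-q / 2))) := by
      funext ε
      rw [theta_symm, show -q / 2 = -(q / 2) by ring, Real.tan_neg]
      ring
    rw [hfun]
    exact h
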